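/- arXiv:2209.04859 — 2 statements merged into one kernel-verified Lean document; each statement's English description precedes it below -/
import Mathlib

section
/- Let $T_0, T_1$ be rooted perfect finitely branching trees of height $\omega$ without terminal nodes, and let $\gamma : [T_0] \times [T_1] \to 2$. If there is no somewhere dense grid inside $\gamma^{-1}(\{0\})$, then there exists a dense grid inside $\gamma^{-1}(\{1\})$: sets $Y_0 \subseteq [T_0]$, $Y_1 \subseteq [T_1]$, each dense in the respective branch space, with $Y_0 \times Y_1 \subseteq \gamma^{-1}(\{1\})$. -/
/-- A rooted, perfect, finitely branching tree of height `ω` without terminal nodes,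
represented as a set of finite sequences of natural numbers closed under prefixes.
Nodes at level `m` are the members of length `m`. -/
structure OmegaTree where
  mem : Set (List ℕ)
  root_mem : ([] : List ℕ) ∈ mem
  prefix_closed : ∀ s ∈ mem, ∀ t : List ℕ, t <+: s → t ∈ mem
  finitely_branching : ∀ s ∈ mem, {n : ℕ | s ++ [n] ∈ mem}.Finite
  no_terminal : ∀ s ∈ mem, ∃ n : ℕ, s ++ [n] ∈ mem
  perfect : ∀ s ∈ mem, ∃ t ∈ mem, s <+: t ∧
    ∃ n m : ℕ, n ≠ m ∧ t ++ [n] ∈ mem ∧ t ++ [m] ∈ mem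

/-- The branch space of an `OmegaTree`, topologized as a subspace of Baire space
(the topology of pointwise convergence). -/
def OmegaTree.Branch (T : OmegaTree) : Type :=
  {x : ℕ → ℕ // ∀ m : ℕ, (List.ofFn fun i : Fin m => x i) ∈ T.mem}

instance (T : OmegaTree) : TopologicalSpace T.Branch :=
  inferInstanceAs (TopologicalSpace {x : ℕ → ℕ // ∀ m : ℕ, (List.ofFn fun i : Fin m => x i) ∈ T.mem})

/-- The level-`m` node of a branch. -/
def OmegaTree.Branch.node {T : OmegaTree} (x : T.Branch) (m : ℕ) : List ℕ :=
  List.ofFn fun i : Fin m => x.val i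

/-- `S` is an `a`-strong subtree of `T`, where the infinite set `a ⊆ ω` is given by
its increasing enumeration `a : ℕ → ℕ`: all nodes of `S` lie on `T`-levels `a m`;
there is a unique node at level `a 0`; each node of `S` at level `a (m+1)` extends a
node of `S` at level `a m`; and for each node `s` of `S` at level `a m` and each
immediate successor of `s` in `T` there is exactly one node of `S` at level `a (m+1)`
extending it. -/
def IsStrongSubtree (T : OmegaTree) (a : ℕ → ℕ) (S : Set (List ℕ)) : Prop :=
  S ⊆ T.mem ∧
  (∀ s ∈ S, ∃ m : ℕ, s.length = a m) ∧
  (∃! s : List ℕ, s ∈ S ∧ s.length = a 0) ∧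
  (∀ m : ℕ, ∀ t ∈ S, t.length = a (m + 1) →
    ∃ s ∈ S, s.length = a m ∧ s <+: t) ∧
  (∀ m : ℕ, ∀ s ∈ S, s.length = a m → ∀ n : ℕ, s ++ [n] ∈ T.mem →
    ∃! t : List ℕ, t ∈ S ∧ t.length = a (m + 1) ∧ (s ++ [n]) <+: t)

open Set Topology

section Aux

variable {α : Type*} [TopologicalSpace α]

lemma aux_not_isMeagre_of_isOpen [BaireSpace α] {U : Set α} (hU : IsOpen U)
    (hne : U.Nonempty) : ¬ IsMeagre U := by
  intro hm
  have hd : Dense Uᶜ := dense_of_mem_residual hm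
  obtain ⟨z, hz1, hz2⟩ := hd.inter_open_nonempty U hU hne
  exact hz2 hz1

lemma aux_isMeagre_iUnion {ι : Type*} [Countable ι] {s : ι → Set α}
    (hs : ∀ i, IsMeagre (s i)) : IsMeagre (⋃ i, s i) := by
  rw [IsMeagre, compl_iUnion]
  exact countable_iInter_mem.mpr hs

lemma aux_swd_of_not_isMeagre {s : Set α} (h : ¬ IsMeagre s) :
    ∃ U : Set α, IsOpen U ∧ U.Nonempty ∧ U ⊆ closure s := by
  by_contra hc
  push_neg at hc
  have hnwd : IsNowhereDense s := by
    rw [IsNowhereDense]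
    by_contra hne
    obtain ⟨z, hz⟩ := Set.nonempty_iff_ne_empty.mpr hne
    exact (hc (interior (closure s)) isOpen_interior ⟨z, hz⟩) interior_subset
  exact h (isMeagre_iff_countable_union_isNowhereDense.mpr
    ⟨{closure s}, by simpa using hnwd.closure, Set.countable_singleton _,
      by simpa using subset_closure⟩)

lemma aux_diff_not_isMeagre {s M : Set α} (hs : ¬ IsMeagre s) (hM : IsMeagre M) :
    ¬ IsMeagre (s \ M) := by
  intro hd
  apply hs
  have : s ⊆ (s \ M) ∪ M := by
    intro x hx
    by_cases hxM : x ∈ M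
    · exact Or.inr hxM
    · exact Or.inl ⟨hx, hxM⟩
  have hu : IsMeagre ((s \ M) ∪ M) := by
    rw [IsMeagre, Set.compl_union]
    exact Filter.inter_mem hd hM
  exact hu.mono this

lemma aux_basis_seq [SecondCountableTopology α] [Nonempty α] :
    ∃ u : ℕ → Set α, (∀ n, IsOpen (u n)) ∧ (∀ n, (u n).Nonempty) ∧
      ∀ O : Set α, IsOpen O → ∀ x ∈ O, ∃ n, x ∈ u n ∧ u n ⊆ O := by
  obtain ⟨b, hbc, hbe, hb⟩ := TopologicalSpace.exists_countable_basis α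
  have hbne : b.Nonempty := by
    obtain ⟨x⟩ := ‹Nonempty α›
    obtain ⟨v, hv, -, -⟩ := hb.exists_subset_of_mem_open (Set.mem_univ x) isOpen_univ
    exact ⟨v, hv⟩
  obtain ⟨u, hu⟩ := hbc.exists_eq_range hbne
  refine ⟨u, ?_, ?_, ?_⟩
  · intro n
    exact hb.isOpen (by rw [hu]; exact Set.mem_range_self n)
  · intro n
    have : u n ∈ b := by rw [hu]; exact Set.mem_range_self n
    rcases Set.eq_empty_or_nonempty (u n) with he | hne
    · exact absurd (he ▸ this) hbe
    · exact hne
  · intro O hO x hx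
    obtain ⟨v, hv, hxv, hvO⟩ := hb.exists_subset_of_mem_open hx hO
    rw [hu] at hv
    obtain ⟨n, rfl⟩ := hv
    exact ⟨n, hxv, hvO⟩

/-- `E` is nonmeager in every nonempty open set. -/
def AuxBig (E : Set α) : Prop :=
  ∀ V : Set α, IsOpen V → V.Nonempty → ¬ IsMeagre (V ∩ E)

lemma aux_big_univ [BaireSpace α] : AuxBig (Set.univ : Set α) := by
  intro V hV hne hm
  exact aux_not_isMeagre_of_isOpen hV hne (by simpa using hm)

lemma aux_countable_swd [SecondCountableTopology α] [Nonempty α] {s : Set α}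
    (h : ¬ IsMeagre s) :
    ∃ P : Set α, P ⊆ s ∧ P.Countable ∧
      ∃ U : Set α, IsOpen U ∧ U.Nonempty ∧ U ⊆ closure P := by
  obtain ⟨u, huo, hune, hub⟩ := aux_basis_seq (α := α)
  obtain ⟨O, hO, hOne, hOcl⟩ := aux_swd_of_not_isMeagre h
  set K : Set ℕ := {k | (u k ∩ s).Nonempty} with hK
  refine ⟨Set.range (fun k : K => k.2.some), ?_, Set.countable_range _, O, hO, hOne, ?_⟩
  · rintro x ⟨k, rfl⟩
    exact k.2.some_mem.2
  · intro x hx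
    rw [mem_closure_iff]
    intro N hN hxN
    obtain ⟨n, hxn, hnsub⟩ := hub (N ∩ O) (hN.inter hO) x ⟨hxN, hx⟩
    have hxcl : x ∈ closure s := hOcl hx
    have hns : (u n ∩ s).Nonempty := by
      rw [mem_closure_iff] at hxcl
      exact hxcl (u n) (huo n) hxn
    refine ⟨(⟨n, hns⟩ : K).2.some, (hnsub (⟨n, hns⟩ : K).2.some_mem.1).1, ⟨⟨n, hns⟩, rfl⟩⟩

variable {β : Type*} [TopologicalSpace β]

/-- The key step lemma. -/
lemma aux_key [SecondCountableTopology α] [Nonempty α]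
    [SecondCountableTopology β] [Nonempty β]
    (A : Set (α × β))
    (hA : ∀ P : Set α, ∀ Q : Set β,
      (∃ U : Set α, IsOpen U ∧ U.Nonempty ∧ U ⊆ closure P) →
      (∃ V : Set β, IsOpen V ∧ V.Nonempty ∧ V ⊆ closure Q) →
      ¬ P ×ˢ Q ⊆ A)
    {E : Set α} (hE : AuxBig E) {D : Set β} (hD : AuxBig D)
    {U : Set α} (hU : IsOpen U) (hUne : U.Nonempty) :
    ∃ x : α, x ∈ U ∧ x ∈ E ∧ AuxBig (D ∩ {y : β | (x, y) ∉ A}) := by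
  obtain ⟨v, hvo, hvne, hvb⟩ := aux_basis_seq (α := β)
  by_contra hcon
  push_neg at hcon
  -- each x ∈ U ∩ E is "bad": some basic open v m witnesses failure of bigness
  set Bad : ℕ → Set α := fun m => {x | IsMeagre (v m ∩ (D ∩ {y : β | (x, y) ∉ A}))} with hBad
  have hcover : U ∩ E ⊆ ⋃ m, (Bad m ∩ (U ∩ E)) := by
    rintro x ⟨hxU, hxE⟩
    have hnb := hcon x hxU hxE
    rw [AuxBig] at hnb
    push_neg at hnb
    obtain ⟨V, hV, hVne, hVm⟩ := hnb
    obtain ⟨y, hy⟩ := hVne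
    obtain ⟨m, hym, hmV⟩ := hvb V hV y hy
    refine Set.mem_iUnion.mpr ⟨m, ⟨?_, hxU, hxE⟩⟩
    exact IsMeagre.mono (s := V ∩ (D ∩ {y : β | (x, y) ∉ A})) (t := v m ∩ (D ∩ {y : β | (x, y) ∉ A})) (fun z hz => ⟨hmV hz.1, hz.2⟩) hVm
  have hUE : ¬ IsMeagre (U ∩ E) := hE U hU hUne
  have hm : ∃ m, ¬ IsMeagre (Bad m ∩ (U ∩ E)) := by
    by_contra hc
    push_neg at hc
    exact hUE ((aux_isMeagre_iUnion hc).mono hcover)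
  obtain ⟨m, hm⟩ := hm
  obtain ⟨P, hPsub, hPc, hPswd⟩ := aux_countable_swd hm
  have : Countable P := hPc.to_subtype
  set M : Set β := ⋃ x : P, (v m ∩ (D ∩ {y : β | ((x : α), y) ∉ A})) with hM
  have hMm : IsMeagre M := aux_isMeagre_iUnion (fun x => (hPsub x.2).1)
  have hQ : ¬ IsMeagre ((v m ∩ D) \ M) :=
    aux_diff_not_isMeagre (hD (v m) (hvo m) (hvne m)) hMm
  obtain ⟨V', hV'⟩ := aux_swd_of_not_isMeagre hQ
  refine hA P ((v m ∩ D) \ M) hPswd ⟨V', hV'⟩ ?_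
  rintro ⟨x, y⟩ ⟨hxP, hyQ⟩
  by_contra hxyA
  exact hyQ.2 (Set.mem_iUnion.mpr ⟨⟨x, hxP⟩, ⟨hyQ.1.1, hyQ.1.2, hxyA⟩⟩)

end Aux

lemma branch_closed (T : OmegaTree) :
    IsClosed {x : ℕ → ℕ | ∀ m : ℕ, (List.ofFn fun i : Fin m => x i) ∈ T.mem} := by
  have heq : {x : ℕ → ℕ | ∀ m : ℕ, (List.ofFn fun i : Fin m => x i) ∈ T.mem} =
      ⋂ m : ℕ, (fun x : ℕ → ℕ => fun i : Fin m => x i) ⁻¹'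
        {f : Fin m → ℕ | List.ofFn f ∈ T.mem} := by
    ext x; simp [Set.mem_iInter]
  rw [heq]
  exact isClosed_iInter fun m =>
    IsClosed.preimage (continuous_pi fun i => continuous_apply _) (isClosed_discrete _)

instance (T : OmegaTree) : PolishSpace T.Branch := (branch_closed T).polishSpace

instance (T : OmegaTree) : SecondCountableTopology T.Branch :=
  inferInstanceAs (SecondCountableTopology
    {x : ℕ → ℕ | ∀ m : ℕ, (List.ofFn fun i : Fin m => x i) ∈ T.mem})

instance (T : OmegaTree) : BaireSpace T.Branch := by
  letI := TopologicalSpace.upgradeIsCompletelyMetrizable T.Branch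
  infer_instance

/-- The strong form of `PG₂` for 2-colorings: if `γ` is a 2-coloring of the product
of the branch spaces of two trees and there is no somewhere dense grid inside
`γ⁻¹{0}`, then there is a (fully) dense grid inside `γ⁻¹{1}`. -/
theorem stmt17 (T₀ T₁ : OmegaTree) (γ : T₀.Branch × T₁.Branch → Fin 2)
    (h : ¬ ∃ (Y₀ : Set T₀.Branch) (Y₁ : Set T₁.Branch)
          (U₀ : Set T₀.Branch) (U₁ : Set T₁.Branch),
        IsOpen U₀ ∧ U₀.Nonempty ∧ U₀ ⊆ closure Y₀ ∧
        IsOpen U₁ ∧ U₁.Nonempty ∧ U₁ ⊆ closure Y₁ ∧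
        Y₀ ×ˢ Y₁ ⊆ γ ⁻¹' {0}) :
    ∃ (Y₀ : Set T₀.Branch) (Y₁ : Set T₁.Branch),
      Dense Y₀ ∧ Dense Y₁ ∧ Y₀ ×ˢ Y₁ ⊆ γ ⁻¹' {1} := by
  classical
  rcases isEmpty_or_nonempty T₀.Branch with h0 | h0
  · exact ⟨Set.univ, Set.univ, dense_univ, dense_univ, fun p _ => (h0.false p.1).elim⟩
  rcases isEmpty_or_nonempty T₁.Branch with h1 | h1
  · exact ⟨Set.univ, Set.univ, dense_univ, dense_univ, fun p _ => (h1.false p.2).elim⟩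
  have hA : ∀ P : Set T₀.Branch, ∀ Q : Set T₁.Branch,
      (∃ U : Set T₀.Branch, IsOpen U ∧ U.Nonempty ∧ U ⊆ closure P) →
      (∃ V : Set T₁.Branch, IsOpen V ∧ V.Nonempty ∧ V ⊆ closure Q) →
      ¬ P ×ˢ Q ⊆ γ ⁻¹' ({0} : Set (Fin 2)) := by
    rintro P Q ⟨U, hU1, hU2, hU3⟩ ⟨V, hV1, hV2, hV3⟩ hPQ
    exact h ⟨P, Q, U, V, hU1, hU2, hU3, hV1, hV2, hV3, hPQ⟩
  have hA' : ∀ P : Set T₁.Branch, ∀ Q : Set T₀.Branch,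
      (∃ U : Set T₁.Branch, IsOpen U ∧ U.Nonempty ∧ U ⊆ closure P) →
      (∃ V : Set T₀.Branch, IsOpen V ∧ V.Nonempty ∧ V ⊆ closure Q) →
      ¬ P ×ˢ Q ⊆ {q : T₁.Branch × T₀.Branch | (q.2, q.1) ∈ γ ⁻¹' ({0} : Set (Fin 2))} := by
    rintro P Q ⟨U, hU1, hU2, hU3⟩ ⟨V, hV1, hV2, hV3⟩ hPQ
    refine h ⟨Q, P, V, U, hV1, hV2, hV3, hU1, hU2, hU3, ?_⟩
    rintro ⟨x, y⟩ ⟨hx, hy⟩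
    exact hPQ (Set.mk_mem_prod hy hx)
  obtain ⟨uX, huXo, huXne, huXb⟩ := aux_basis_seq (α := T₀.Branch)
  obtain ⟨uY, huYo, huYne, huYb⟩ := aux_basis_seq (α := T₁.Branch)
  have step : ∀ (E : Set T₀.Branch) (D : Set T₁.Branch), AuxBig E → AuxBig D → ∀ n : ℕ,
      ∃ q : (T₀.Branch × T₁.Branch) × (Set T₀.Branch × Set T₁.Branch),
        (AuxBig q.2.1 ∧ AuxBig q.2.2) ∧
        q.1.1 ∈ uX n ∧ q.1.1 ∈ E ∧
        q.2.2 = D ∩ {y : T₁.Branch | (q.1.1, y) ∉ γ ⁻¹' ({0} : Set (Fin 2))} ∧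
        q.1.2 ∈ uY n ∧ q.1.2 ∈ q.2.2 ∧
        q.2.1 = E ∩ {x : T₀.Branch | (x, q.1.2) ∉ γ ⁻¹' ({0} : Set (Fin 2))} := by
    intro E D hE hD n
    obtain ⟨x, hxU, hxE, hxBig⟩ :=
      aux_key (γ ⁻¹' ({0} : Set (Fin 2))) hA hE hD (huXo n) (huXne n)
    obtain ⟨y, hyV, hyD, hyBig⟩ :=
      aux_key {q : T₁.Branch × T₀.Branch | (q.2, q.1) ∈ γ ⁻¹' ({0} : Set (Fin 2))} hA' hxBig hE
        (huYo n) (huYne n)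
    exact ⟨((x, y), (E ∩ {x' : T₀.Branch | (x', y) ∉ γ ⁻¹' ({0} : Set (Fin 2))},
        D ∩ {y' : T₁.Branch | (x, y') ∉ γ ⁻¹' ({0} : Set (Fin 2))})),
      ⟨hyBig, hxBig⟩, hxU, hxE, rfl, hyV, hyD, rfl⟩
  let St := {s : Set T₀.Branch × Set T₁.Branch // AuxBig s.1 ∧ AuxBig s.2}
  let next : St → ℕ → (T₀.Branch × T₁.Branch) × St := fun s n =>
    ((Classical.choose (step s.1.1 s.1.2 s.2.1 s.2.2 n)).1,
     ⟨(Classical.choose (step s.1.1 s.1.2 s.2.1 s.2.2 n)).2,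
      (Classical.choose_spec (step s.1.1 s.1.2 s.2.1 s.2.2 n)).1⟩)
  have next_spec : ∀ (s : St) (n : ℕ),
      (next s n).1.1 ∈ uX n ∧ (next s n).1.1 ∈ s.1.1 ∧
      (next s n).2.1.2 = s.1.2 ∩ {y : T₁.Branch | ((next s n).1.1, y) ∉ γ ⁻¹' ({0} : Set (Fin 2))} ∧
      (next s n).1.2 ∈ uY n ∧ (next s n).1.2 ∈ (next s n).2.1.2 ∧
      (next s n).2.1.1 = s.1.1 ∩ {x : T₀.Branch | (x, (next s n).1.2) ∉ γ ⁻¹' ({0} : Set (Fin 2))} :=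
    fun s n => (Classical.choose_spec (step s.1.1 s.1.2 s.2.1 s.2.2 n)).2
  let Sq : ℕ → St := fun n =>
    Nat.rec (motive := fun _ => St)
      ⟨(Set.univ, Set.univ), ⟨aux_big_univ, aux_big_univ⟩⟩
      (fun n s => (next s n).2) n
  let xs : ℕ → T₀.Branch := fun n => (next (Sq n) n).1.1
  let ys : ℕ → T₁.Branch := fun n => (next (Sq n) n).1.2
  let Es : ℕ → Set T₀.Branch := fun n => (Sq n).1.1
  let Ds : ℕ → Set T₁.Branch := fun n => (Sq n).1.2
  have hSq : ∀ n : ℕ, Sq (n + 1) = (next (Sq n) n).2 := fun n => rfl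
  have hDsucc : ∀ n : ℕ,
      Ds (n + 1) = Ds n ∩ {y : T₁.Branch | (xs n, y) ∉ γ ⁻¹' ({0} : Set (Fin 2))} :=
    fun n => (next_spec (Sq n) n).2.2.1
  have hEsucc : ∀ n : ℕ,
      Es (n + 1) = Es n ∩ {x : T₀.Branch | (x, ys n) ∉ γ ⁻¹' ({0} : Set (Fin 2))} :=
    fun n => (next_spec (Sq n) n).2.2.2.2.2
  have hxU : ∀ n, xs n ∈ uX n := fun n => (next_spec (Sq n) n).1
  have hyV : ∀ n, ys n ∈ uY n := fun n => (next_spec (Sq n) n).2.2.2.1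
  have hyD : ∀ n, ys n ∈ Ds (n + 1) := fun n => (next_spec (Sq n) n).2.2.2.2.1
  have hxE : ∀ n, xs n ∈ Es n := fun n => (next_spec (Sq n) n).2.1
  have Dmono : ∀ n m : ℕ, n ≤ m → Ds m ⊆ Ds n := by
    intro n m hnm
    induction m, hnm using Nat.le_induction with
    | base => exact subset_rfl
    | succ m hnm ih => exact (hDsucc m ▸ Set.inter_subset_left).trans ih
  have Emono : ∀ n m : ℕ, n ≤ m → Es m ⊆ Es n := by
    intro n m hnm
    induction m, hnm using Nat.le_induction with
    | base => exact subset_rfl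
    | succ m hnm ih => exact (hEsucc m ▸ Set.inter_subset_left).trans ih
  have cross : ∀ i j : ℕ, (xs i, ys j) ∉ γ ⁻¹' ({0} : Set (Fin 2)) := by
    intro i j
    rcases le_or_gt i j with hij | hij
    · have : ys j ∈ Ds (i + 1) := Dmono (i + 1) (j + 1) (by omega) (hyD j)
      rw [hDsucc i] at this
      exact this.2
    · have : xs i ∈ Es (j + 1) := Emono (j + 1) i (by omega) (hxE i)
      rw [hEsucc j] at this
      exact this.2
  refine ⟨Set.range xs, Set.range ys, ?_, ?_, ?_⟩
  · rw [dense_iff_inter_open]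
    rintro U hU ⟨z, hz⟩
    obtain ⟨n, -, hsub⟩ := huXb U hU z hz
    exact ⟨xs n, hsub (hxU n), n, rfl⟩
  · rw [dense_iff_inter_open]
    rintro U hU ⟨z, hz⟩
    obtain ⟨n, -, hsub⟩ := huYb U hU z hz
    exact ⟨ys n, hsub (hyV n), n, rfl⟩
  · rintro ⟨p, q⟩ ⟨⟨i, rfl⟩, ⟨j, rfl⟩⟩
    have hne : γ (xs i, ys j) ≠ 0 := fun hz => cross i j (by simpa using hz)
    have : γ (xs i, ys j) = 1 := by
      have hlt := (γ (xs i, ys j)).isLt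
      have hv0 : (γ (xs i, ys j)).val ≠ 0 := fun hv => hne (Fin.ext hv)
      exact Fin.ext (by omega)
    simpa using this
end

section
/- Suppose $\langle u_b : b \in [H]^n \rangle$ is a uniform $n$-dimensional $\Delta$-system with witnessing sets $\langle \mathbf{r}_{\mathbf{m}} : \mathbf{m} \subseteq n \rangle$, where $H$ is a set of ordinals. Then for any $m \leq n$ and $a \in [H]^m$, the set $u_b[\mathbf{r}_{\mathbf{m}_a}]$, where $b \in [H]^n$ satisfies $b[m] = a$ and $\mathbf{r}_{\mathbf{m}_a} = \mathbf{r}_{\{0,\ldots,m-1\}}$, does not depend on the choice of $b$. -/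
/-- The `i`-th element (in increasing order) of a finite set of ordinals
(junk value `0` if `i` is out of range). -/
noncomputable def nth (s : Finset Ordinal) (i : ℕ) : Ordinal :=
  (s.sort (· ≤ ·)).getD i 0

/-- Two finite sets of ordinals are aligned if they have the same order type
(cardinality) and every common element occupies the same relative position in both. -/
def Aligned (a b : Finset Ordinal) : Prop :=
  a.card = b.card ∧
  ∀ γ ∈ a ∩ b, (a.filter (fun x => x < γ)).card = (b.filter (fun x => x < γ)).card

/-- `rset a b = {i < |a| : a(i) = b(i)}` for aligned sets `a, b`. -/
noncomputable def rset (a b : Finset Ordinal) : Finset ℕ :=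
  (Finset.range a.card).filter (fun i => nth a i = nth b i)

/-- `⟨u b : b ∈ [H]^n⟩` is a uniform `n`-dimensional `Δ`-system with witnesses
`ρ` and `⟨rr m : m ⊆ n⟩`. -/
def IsUniformDeltaSystem (H : Set Ordinal) (n : ℕ) (u : Finset Ordinal → Finset Ordinal)
    (ρ : ℕ) (rr : Finset ℕ → Finset ℕ) : Prop :=
  (∀ b : Finset Ordinal, ↑b ⊆ H → b.card = n → (u b).card = ρ) ∧
  (∀ a b : Finset Ordinal, ↑a ⊆ H → ↑b ⊆ H → a.card = n → b.card = n →
    Aligned a b → (Aligned (u a) (u b) ∧ rset (u a) (u b) = rr (rset a b))) ∧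
  (∀ m₀ m₁ : Finset ℕ, m₀ ⊆ Finset.range n → m₁ ⊆ Finset.range n →
    rr (m₀ ∩ m₁) = rr m₀ ∩ rr m₁)

lemma nth_eq_get (s : Finset Ordinal) (i : ℕ) (h : i < s.card) :
    nth s i = (s.sort (· ≤ ·)).get ⟨i, by rwa [Finset.length_sort]⟩ := by
  have hl : i < (s.sort (· ≤ ·)).length := by rwa [Finset.length_sort]
  simp [nth, List.getElem?_eq_getElem hl, List.get_eq_getElem]

lemma nth_mem {s : Finset Ordinal} {i : ℕ} (h : i < s.card) : nth s i ∈ s := by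
  rw [nth_eq_get s i h]
  exact (Finset.mem_sort (· ≤ ·)).1 (List.get_mem _ _)

lemma nth_lt_nth {s : Finset Ordinal} {i j : ℕ} (hij : i < j) (h : j < s.card) :
    nth s i < nth s j := by
  rw [nth_eq_get s i (hij.trans h), nth_eq_get s j h]
  exact (s.sortedLT_sort).strictMono_get hij

lemma exists_nth {s : Finset Ordinal} {x : Ordinal} (hx : x ∈ s) :
    ∃ i, i < s.card ∧ nth s i = x := by
  have hx' : x ∈ s.sort (· ≤ ·) := (Finset.mem_sort (· ≤ ·)).2 hx
  obtain ⟨⟨i, hi⟩, rfl⟩ := List.mem_iff_get.1 hx'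
  have hi' : i < s.card := by rwa [Finset.length_sort] at hi
  refine ⟨i, hi', ?_⟩
  rw [nth_eq_get s i hi']

lemma image_nth_subset (s : Finset Ordinal) (m : ℕ) (hm : m ≤ s.card) :
    (Finset.range m).image (nth s) ⊆ s := by
  intro x hx
  simp only [Finset.mem_image, Finset.mem_range] at hx
  obtain ⟨i, hi, rfl⟩ := hx
  exact nth_mem (hi.trans_le hm)

lemma image_nth_card (s : Finset Ordinal) (m : ℕ) (hm : m ≤ s.card) :
    ((Finset.range m).image (nth s)).card = m := by
  rw [Finset.card_image_of_injOn, Finset.card_range]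
  intro i hi j hj hij
  simp only [Finset.coe_range, Set.mem_Iio] at hi hj
  by_contra hne
  rcases Nat.lt_or_ge i j with h | h
  · exact absurd hij (nth_lt_nth h (hj.trans_le hm)).ne
  · exact absurd hij.symm (nth_lt_nth (Nat.lt_of_le_of_ne h (Ne.symm hne)) (hi.trans_le hm)).ne

lemma image_nth_init (s : Finset Ordinal) (m : ℕ) (hm : m ≤ s.card) :
    ∀ x ∈ s, x ∉ (Finset.range m).image (nth s) →
      ∀ y ∈ (Finset.range m).image (nth s), y < x := by
  intro x hx hxim y hy
  obtain ⟨j, hj, rfl⟩ := exists_nth hx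
  simp only [Finset.mem_image, Finset.mem_range] at hy hxim
  obtain ⟨i, hi, rfl⟩ := hy
  have hij : i < j := by
    by_contra hle
    push_neg at hle
    exact hxim ⟨j, lt_of_le_of_lt hle hi, rfl⟩
  exact nth_lt_nth hij hj

lemma initseg_unique {s a a' : Finset Ordinal} (ha : a ⊆ s) (ha' : a' ⊆ s)
    (hc : a.card = a'.card)
    (h1 : ∀ x ∈ s, x ∉ a → ∀ y ∈ a, y < x)
    (h2 : ∀ x ∈ s, x ∉ a' → ∀ y ∈ a', y < x) : a = a' := by
  by_cases hss : a ⊆ a'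
  · exact Finset.eq_of_subset_of_card_le hss hc.ge
  · obtain ⟨x, hxa, hxa'⟩ := Finset.not_subset.1 hss
    by_cases hss' : a' ⊆ a
    · have heq := Finset.eq_of_subset_of_card_le hss' hc.le
      exact absurd (heq ▸ hxa) hxa'
    · obtain ⟨y, hya', hya⟩ := Finset.not_subset.1 hss'
      have h3 := h2 x (ha hxa) hxa' y hya'
      have h4 := h1 y (ha' hya') hya x hxa
      exact absurd (h3.trans h4) (lt_irrefl _)

lemma image_nth_eq {s a : Finset Ordinal} {m : ℕ} (hm : m ≤ s.card) (has : a ⊆ s)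
    (hac : a.card = m) (hinit : ∀ x ∈ s, x ∉ a → ∀ y ∈ a, y < x) :
    (Finset.range m).image (nth s) = a :=
  initseg_unique (image_nth_subset s m hm) has
    (by rw [image_nth_card s m hm, hac]) (image_nth_init s m hm) hinit

lemma sort_image_nth (s : Finset Ordinal) (m : ℕ) (hm : m ≤ s.card) :
    ((Finset.range m).image (nth s)).sort (· ≤ ·) = (s.sort (· ≤ ·)).take m := by
  have hsub : List.Sublist ((s.sort (· ≤ ·)).take m) (s.sort (· ≤ ·)) := List.take_sublist m _
  apply List.Perm.eq_of_pairwise' (Finset.pairwise_sort _ _)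
    (List.Pairwise.sublist hsub (Finset.pairwise_sort s _))
  apply List.perm_of_nodup_nodup_toFinset_eq (Finset.sort_nodup _ _)
    (List.Nodup.sublist hsub (Finset.sort_nodup s _))
  rw [Finset.sort_toFinset]
  ext x
  rw [List.mem_toFinset, List.mem_take_iff_getElem]
  constructor
  · intro hx
    obtain ⟨i, hir, rfl⟩ := Finset.mem_image.1 hx
    have him := Finset.mem_range.1 hir
    have hic : i < s.card := him.trans_le hm
    have hmin : i < min m (s.sort (· ≤ ·)).length := by
      rw [Finset.length_sort]; exact lt_min him hic
    exact ⟨i, hmin, by rw [nth_eq_get s i hic, List.get_eq_getElem]⟩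
  · rintro ⟨i, hi, rfl⟩
    have him : i < m := lt_of_lt_of_le hi (min_le_left _ _)
    have hic : i < s.card := by
      have h2 := lt_of_lt_of_le hi (min_le_right _ _)
      rwa [Finset.length_sort] at h2
    exact Finset.mem_image.2 ⟨i, Finset.mem_range.2 him,
      by rw [nth_eq_get s i hic, List.get_eq_getElem]⟩

lemma nth_of_image {s a : Finset Ordinal} {m : ℕ} (hm : m ≤ s.card)
    (h : (Finset.range m).image (nth s) = a) {i : ℕ} (hi : i < m) :
    nth s i = nth a i := by
  subst h
  rw [nth, nth, sort_image_nth s m hm]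
  have hlen : i < (s.sort (· ≤ ·)).length := by rw [Finset.length_sort]; exact hi.trans_le hm
  rw [List.getD_eq_getElem?_getD, List.getD_eq_getElem?_getD,
    List.getElem?_take_of_lt hi]

lemma images_eq_of_aligned {H : Set Ordinal} {n : ℕ} {u : Finset Ordinal → Finset Ordinal}
    {ρ : ℕ} {rr : Finset ℕ → Finset ℕ} (hu : IsUniformDeltaSystem H n u ρ rr)
    {m : ℕ} (hm : m ≤ n) {b c : Finset Ordinal} (hb : ↑b ⊆ H) (hc : ↑c ⊆ H)
    (hbn : b.card = n) (hcn : c.card = n) (hal : Aligned b c)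
    (hr : Finset.range m ⊆ rset b c) :
    (rr (Finset.range m)).image (nth (u b)) = (rr (Finset.range m)).image (nth (u c)) := by
  obtain ⟨-, hrs⟩ := hu.2.1 b c hb hc hbn hcn hal
  have hsub1 : rset b c ⊆ Finset.range n := by
    intro i hi
    rw [rset, Finset.mem_filter] at hi
    exact hbn ▸ hi.1
  have h3 := hu.2.2 (Finset.range m) (rset b c)
    (by intro i hi; exact Finset.mem_range.2 (lt_of_lt_of_le (Finset.mem_range.1 hi) hm)) hsub1
  rw [Finset.inter_eq_left.2 hr] at h3
  have hsub : rr (Finset.range m) ⊆ rset (u b) (u c) := by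
    rw [hrs, h3]
    exact Finset.inter_subset_right
  apply Finset.image_congr
  intro i hi
  have h4 := hsub hi
  rw [rset, Finset.mem_filter] at h4
  exact h4.2

lemma onestep {H : Set Ordinal} {n : ℕ} {u : Finset Ordinal → Finset Ordinal}
    {ρ : ℕ} {rr : Finset ℕ → Finset ℕ} (hu : IsUniformDeltaSystem H n u ρ rr)
    {m : ℕ} (hm : m ≤ n) {a b b' : Finset Ordinal} (hacard : a.card = m)
    (hb : ↑b ⊆ H) (hb' : ↑b' ⊆ H) (hbn : b.card = n) (hb'n : b'.card = n)
    (hba : (Finset.range m).image (nth b) = a) (hb'a : (Finset.range m).image (nth b') = a)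
    {z : Ordinal} (hz : z ∈ b' \ b) (hzmax : ∀ w ∈ (b \ b') ∪ (b' \ b), w ≤ z) :
    ∃ c : Finset Ordinal, ↑c ⊆ H ∧ c.card = n ∧ (Finset.range m).image (nth c) = a ∧
      ((rr (Finset.range m)).image (nth (u b)) = (rr (Finset.range m)).image (nth (u c))) ∧
      (∀ w ∈ (c \ b') ∪ (b' \ c), w < z) := by
  rw [Finset.mem_sdiff] at hz
  obtain ⟨hzb', hzb⟩ := hz
  have hmb : m ≤ b.card := hbn ▸ hm
  have hmb' : m ≤ b'.card := hb'n ▸ hm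
  have hab : a ⊆ b := hba ▸ image_nth_subset b m hmb
  have hab' : a ⊆ b' := hb'a ▸ image_nth_subset b' m hmb'
  have hbinit : ∀ x ∈ b, x ∉ a → ∀ y ∈ a, y < x := by
    intro x hx hxa y hy
    exact image_nth_init b m hmb x hx (by rwa [hba]) y (by rwa [hba])
  have hb'init : ∀ x ∈ b', x ∉ a → ∀ y ∈ a, y < x := by
    intro x hx hxa y hy
    exact image_nth_init b' m hmb' x hx (by rwa [hb'a]) y (by rwa [hb'a])
  -- b \ b' is nonempty
  have hcards : (b \ b').card = (b' \ b).card := Finset.card_sdiff_comm (hbn.trans hb'n.symm)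
  have hne : (b \ b').Nonempty := by
    rw [← Finset.card_pos, hcards, Finset.card_pos]
    exact ⟨z, Finset.mem_sdiff.2 ⟨hzb', hzb⟩⟩
  obtain ⟨x₀, hx₀⟩ := hne
  have hx₀b : x₀ ∈ b := (Finset.mem_sdiff.1 hx₀).1
  have hx₀b' : x₀ ∉ b' := (Finset.mem_sdiff.1 hx₀).2
  have hx₀z : x₀ < z := lt_of_le_of_ne (hzmax x₀ (Finset.mem_union_left _ hx₀))
    (fun h => hzb (h ▸ hx₀b))
  -- the maximal element of b below z
  have hFne : (b.filter (fun w => w < z)).Nonempty := ⟨x₀, Finset.mem_filter.2 ⟨hx₀b, hx₀z⟩⟩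
  set xs := (b.filter (fun w => w < z)).max' hFne with hxsdef
  have hxsmem := Finset.max'_mem _ hFne
  have hxsb : xs ∈ b := (Finset.mem_filter.1 hxsmem).1
  have hxsz : xs < z := (Finset.mem_filter.1 hxsmem).2
  have hxsmax : ∀ w ∈ b, w < z → w ≤ xs := fun w hw hwz =>
    Finset.le_max' (b.filter (fun w => w < z)) w (Finset.mem_filter.2 ⟨hw, hwz⟩)
  have hx₀a : x₀ ∉ a := fun h => hx₀b' (hab' h)
  have hax₀ : ∀ y ∈ a, y < x₀ := hbinit x₀ hx₀b hx₀a
  have haxs : ∀ y ∈ a, y < xs := fun y hy =>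
    lt_of_lt_of_le (hax₀ y hy) (hxsmax x₀ hx₀b hx₀z)
  have hxsa : xs ∉ a := fun h => lt_irrefl xs (haxs xs h)
  have hza : z ∉ a := fun h => hzb (hab h)
  have haz : ∀ y ∈ a, y < z := hb'init z hzb' hza
  -- the new set
  set c := insert z (b.erase xs) with hcdef
  have hzerase : z ∉ b.erase xs := fun h => hzb (Finset.mem_of_mem_erase h)
  have hn1 : 1 ≤ n := by
    rw [← hbn]
    exact Finset.card_pos.2 ⟨xs, hxsb⟩
  have hcn : c.card = n := by
    rw [hcdef, Finset.card_insert_of_notMem hzerase, Finset.card_erase_of_mem hxsb, hbn]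
    omega
  have hcH : ↑c ⊆ H := by
    intro w hw
    rw [hcdef] at hw
    simp only [Finset.coe_insert, Set.mem_insert_iff, Finset.coe_erase, Set.mem_diff] at hw
    rcases hw with rfl | ⟨hw, -⟩
    · exact hb' hzb'
    · exact hb hw
  have hac : a ⊆ c := by
    intro y hy
    exact Finset.mem_insert_of_mem (Finset.mem_erase.2 ⟨fun h => hxsa (h ▸ hy), hab hy⟩)
  have hcinit : ∀ x ∈ c, x ∉ a → ∀ y ∈ a, y < x := by
    intro x hx hxa y hy
    rcases Finset.mem_insert.1 hx with rfl | hx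
    · exact haz y hy
    · exact hbinit x (Finset.mem_of_mem_erase hx) hxa y hy
  have hca : (Finset.range m).image (nth c) = a :=
    image_nth_eq (hcn ▸ hm) hac hacard hcinit
  -- key dichotomy for common elements
  have hdich : ∀ γ ∈ b, γ ≠ xs → (γ < xs ∨ z < γ) := by
    intro γ hγ hγxs
    rcases lt_or_ge γ z with h | h
    · exact Or.inl (lt_of_le_of_ne (hxsmax γ hγ h) hγxs)
    · exact Or.inr (lt_of_le_of_ne h (fun he => hzb (he ▸ hγ)))
  -- alignment
  have hal : Aligned b c := by
    refine ⟨hbn.trans hcn.symm, ?_⟩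
    intro γ hγ
    rw [Finset.mem_inter] at hγ
    obtain ⟨hγb, hγc⟩ := hγ
    have hγz : γ ≠ z := fun h => hzb (h ▸ hγb)
    have hγxs : γ ≠ xs := by
      rcases Finset.mem_insert.1 hγc with h | h
      · exact absurd h hγz
      · exact (Finset.mem_erase.1 h).1
    have hfc : c.filter (fun x => x < γ) =
        if z < γ then insert z ((b.filter (fun x => x < γ)).erase xs)
        else (b.filter (fun x => x < γ)).erase xs := by
      rw [hcdef, Finset.filter_insert, Finset.filter_erase]
    rcases hdich γ hγb hγxs with h | h
    · -- γ < xs < z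
      have hnz : ¬ z < γ := fun h2 => absurd (h.trans hxsz) (lt_asymm h2)
      have hxsnot : xs ∉ b.filter (fun x => x < γ) := by
        rw [Finset.mem_filter]
        rintro ⟨-, h2⟩
        exact absurd h h2.asymm
      rw [hfc, if_neg hnz, Finset.erase_eq_of_notMem hxsnot]
    · -- z < γ, so xs < z < γ
      have hxsin : xs ∈ b.filter (fun x => x < γ) :=
        Finset.mem_filter.2 ⟨hxsb, hxsz.trans h⟩
      have hznot : z ∉ (b.filter (fun x => x < γ)).erase xs := by
        intro h2
        exact hzb (Finset.mem_filter.1 (Finset.mem_of_mem_erase h2)).1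
      rw [hfc, if_pos h, Finset.card_insert_of_notMem hznot,
        Finset.card_erase_of_mem hxsin]
      have : 1 ≤ (b.filter (fun x => x < γ)).card := Finset.card_pos.2 ⟨xs, hxsin⟩
      omega
  -- range m ⊆ rset b c
  have hrsub : Finset.range m ⊆ rset b c := by
    intro i hi
    have him : i < m := Finset.mem_range.1 hi
    rw [rset, Finset.mem_filter]
    refine ⟨Finset.mem_range.2 (lt_of_lt_of_le him hmb), ?_⟩
    rw [nth_of_image hmb hba him, nth_of_image (hcn ▸ hm) hca him]
  refine ⟨c, hcH, hcn, hca, images_eq_of_aligned hu hm hb hcH hbn hcn hal hrsub, ?_⟩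
  -- the new symmetric difference is below z
  intro w hw
  rcases Finset.mem_union.1 hw with hw | hw
  · rw [Finset.mem_sdiff] at hw
    obtain ⟨hwc, hwb'⟩ := hw
    have hwz : w ≠ z := fun h => hwb' (h ▸ hzb')
    rcases Finset.mem_insert.1 hwc with h | h
    · exact absurd h hwz
    · exact lt_of_le_of_ne
        (hzmax w (Finset.mem_union_left _ (Finset.mem_sdiff.2 ⟨Finset.mem_of_mem_erase h, hwb'⟩))) hwz
  · rw [Finset.mem_sdiff] at hw
    obtain ⟨hwb', hwc⟩ := hw
    have hwz : w ≠ z := fun h => hwc (h ▸ Finset.mem_insert_self z _)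
    by_cases hwb : w ∈ b
    · have hwxs : w = xs := by
        by_contra h
        exact hwc (Finset.mem_insert_of_mem (Finset.mem_erase.2 ⟨h, hwb⟩))
      rw [hwxs]
      exact hxsz
    · exact lt_of_le_of_ne
        (hzmax w (Finset.mem_union_right _ (Finset.mem_sdiff.2 ⟨hwb', hwb⟩))) hwz

lemma key {H : Set Ordinal} {n : ℕ} {u : Finset Ordinal → Finset Ordinal}
    {ρ : ℕ} {rr : Finset ℕ → Finset ℕ} (hu : IsUniformDeltaSystem H n u ρ rr)
    {m : ℕ} (hm : m ≤ n) {a : Finset Ordinal} (hacard : a.card = m) :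
    ∀ M : Ordinal, ∀ b b' : Finset Ordinal, ↑b ⊆ H → ↑b' ⊆ H → b.card = n → b'.card = n →
      (Finset.range m).image (nth b) = a → (Finset.range m).image (nth b') = a →
      (∀ w ∈ (b \ b') ∪ (b' \ b), w < M) →
      (rr (Finset.range m)).image (nth (u b)) = (rr (Finset.range m)).image (nth (u b')) := by
  intro M
  induction M using Ordinal.induction with
  | h M IH =>
  intro b b' hb hb' hbn hb'n hba hb'a hΔ
  by_cases hbb : b = b'
  · rw [hbb]
  have hΔne : ((b \ b') ∪ (b' \ b)).Nonempty := by
    rw [Finset.nonempty_iff_ne_empty]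
    intro h
    rw [Finset.union_eq_empty, Finset.sdiff_eq_empty_iff_subset,
      Finset.sdiff_eq_empty_iff_subset] at h
    exact hbb (Finset.Subset.antisymm h.1 h.2)
  set z := ((b \ b') ∪ (b' \ b)).max' hΔne with hzdef
  have hzmem := Finset.max'_mem _ hΔne
  have hzmax : ∀ w ∈ (b \ b') ∪ (b' \ b), w ≤ z := fun w hw =>
    Finset.le_max' _ w hw
  have hzM : z < M := hΔ z hzmem
  rcases Finset.mem_union.1 hzmem with hzb | hzb'
  · obtain ⟨c, hcH, hcn, hca, him, hΔ'⟩ :=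
      onestep hu hm hacard hb' hb hb'n hbn hb'a hba hzb
        (by intro w hw; exact hzmax w (by rwa [Finset.union_comm]))
    have h2 := IH z hzM c b hcH hb hcn hbn hca hba hΔ'
    rw [h2] at him
    exact him.symm
  · obtain ⟨c, hcH, hcn, hca, him, hΔ'⟩ :=
      onestep hu hm hacard hb hb' hbn hb'n hba hb'a hzb' hzmax
    have h2 := IH z hzM c b' hcH hb' hcn hb'n hca hb'a hΔ'
    rw [him, h2]

/-- For a uniform `n`-dimensional `Δ`-system `⟨u b : b ∈ [H]^n⟩`, given `m ≤ n` and
`a ∈ [H]^m`, the set `u_b[r_{{0,…,m-1}}]` does not depend on the choice of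
`b ∈ [H]^n` with `b[m] = a` (i.e. whose first `m` elements form the set `a`). -/
theorem stmt18 (H : Set Ordinal) (n : ℕ) (u : Finset Ordinal → Finset Ordinal)
    (ρ : ℕ) (rr : Finset ℕ → Finset ℕ)
    (hu : IsUniformDeltaSystem H n u ρ rr)
    (m : ℕ) (hm : m ≤ n) (a : Finset Ordinal) (ha : ↑a ⊆ H) (hacard : a.card = m)
    (b b' : Finset Ordinal) (hb : ↑b ⊆ H) (hb' : ↑b' ⊆ H)
    (hbcard : b.card = n) (hb'card : b'.card = n)
    (hba : (Finset.range m).image (nth b) = a)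
    (hb'a : (Finset.range m).image (nth b') = a) :
    (rr (Finset.range m)).image (nth (u b)) = (rr (Finset.range m)).image (nth (u b')) := by
  by_cases hbb : b = b'
  · rw [hbb]
  have hΔne : ((b \ b') ∪ (b' \ b)).Nonempty := by
    rw [Finset.nonempty_iff_ne_empty]
    intro h
    rw [Finset.union_eq_empty, Finset.sdiff_eq_empty_iff_subset,
      Finset.sdiff_eq_empty_iff_subset] at h
    exact hbb (Finset.Subset.antisymm h.1 h.2)
  exact key hu hm hacard (Order.succ (((b \ b') ∪ (b' \ b)).max' hΔne)) b b'
    hb hb' hbcard hb'card hba hb'a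
    (fun w hw => Order.lt_succ_iff.2 (Finset.le_max' _ w hw))
end
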